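/- arXiv:2508.12476 — 2 statements merged into one kernel-verified Lean document; each statement's English description precedes it below -/
import Mathlib

section
/- Let A be a 2m-th order n-dimensional Hermitian tensor. If λ ∈ ℂ is an Ĥ-eigenvalue of A, i.e. there exists a nonzero x ∈ ℂⁿ such that Σ_{i₂,...,i_m,j₁,...,j_m} a_{i i₂...i_m j̄₁...j̄_m} x_{i₂}···x_{i_m} conj(x_{j₁})···conj(x_{j_m}) = λ conj(x_i) |x_i|^{2m-2} for all i, then λ is real. -/
open Complex Finset

/-- The conjugate polynomial associated to a `2m`-th order `n`-dimensional complex tensor. -/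
noncomputable def fpoly {n m : ℕ} (A : (Fin m → Fin n) → (Fin m → Fin n) → ℂ)
    (x : Fin n → ℂ) : ℂ :=
  ∑ i : Fin m → Fin n, ∑ j : Fin m → Fin n,
    A i j * (∏ k, x (i k)) * ∏ k, (starRingEnd ℂ) (x (j k))

/-- Hermitian condition for a `2m`-th order tensor. -/
def IsHermitianTensor {n m : ℕ} (A : (Fin m → Fin n) → (Fin m → Fin n) → ℂ) : Prop :=
  ∀ i j, (starRingEnd ℂ) (A i j) = A j i

/-- Conjugate partial-symmetric tensor. -/
def IsCPS {n m : ℕ} (A : (Fin m → Fin n) → (Fin m → Fin n) → ℂ) : Prop :=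
  IsHermitianTensor A ∧
    ∀ (i j : Fin m → Fin n) (σ τ : Equiv.Perm (Fin m)), A (i ∘ σ) (j ∘ τ) = A i j

/-- `λ` is an `Ĥ`-eigenvalue of the `2(m+1)`-th order tensor `A` with eigenvector `x`. -/
noncomputable def IsHhatEigenpair {n m : ℕ}
    (A : (Fin (m+1) → Fin n) → (Fin (m+1) → Fin n) → ℂ)
    (lam : ℂ) (x : Fin n → ℂ) : Prop :=
  x ≠ 0 ∧ ∀ p : Fin n,
    (∑ i : Fin m → Fin n, ∑ j : Fin (m+1) → Fin n,
      A (Fin.cons p i) j * (∏ k, x (i k)) * ∏ k, (starRingEnd ℂ) (x (j k)))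
    = lam * (starRingEnd ℂ) (x p) * ((‖x p‖ : ℂ)) ^ (2*m)

/-- Diagonal entry `a_{p...p p̄...p̄}`. -/
noncomputable def diagEntry {n m : ℕ}
    (A : (Fin m → Fin n) → (Fin m → Fin n) → ℂ) (p : Fin n) : ℂ :=
  A (fun _ => p) (fun _ => p)

/-- `r_p(A)`: sum of moduli of the off-diagonal entries of the `p`-th slice. -/
noncomputable def rOff {n m : ℕ}
    (A : (Fin (m+1) → Fin n) → (Fin (m+1) → Fin n) → ℂ) (p : Fin n) : ℝ :=
  ∑ i : Fin m → Fin n, ∑ j : Fin (m+1) → Fin n,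
    if i = (fun _ => p) ∧ j = (fun _ => p) then 0
    else ‖A (Fin.cons p i) j‖

/-- `r'_p(A)`: sum over tuples in which no index equals `p`. -/
noncomputable def rPrime {n m : ℕ}
    (A : (Fin (m+1) → Fin n) → (Fin (m+1) → Fin n) → ℂ) (p : Fin n) : ℝ :=
  ∑ i : Fin m → Fin n, ∑ j : Fin (m+1) → Fin n,
    if (∀ k, i k ≠ p) ∧ (∀ k, j k ≠ p) then ‖A (Fin.cons p i) j‖ else 0

/-- `r̂_p(A) = r_p(A) - r'_p(A)`. -/
noncomputable def rHat {n m : ℕ}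
    (A : (Fin (m+1) → Fin n) → (Fin (m+1) → Fin n) → ℂ) (p : Fin n) : ℝ :=
  rOff A p - rPrime A p

/-- Entry `a_{p q...q q̄...q̄}`. -/
noncomputable def aSlice {n m : ℕ}
    (A : (Fin (m+1) → Fin n) → (Fin (m+1) → Fin n) → ℂ) (p q : Fin n) : ℂ :=
  A (Fin.cons p (fun _ => q)) (fun _ => q)

/-- `r_p^q(A) = r_p(A) - |a_{p q...q q̄...q̄}|`. -/
noncomputable def rOffSub {n m : ℕ}
    (A : (Fin (m+1) → Fin n) → (Fin (m+1) → Fin n) → ℂ) (p q : Fin n) : ℝ :=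
  rOff A p - ‖aSlice A p q‖

/-- Hermitian positive definiteness. -/
def HermitianPD {n m : ℕ} (A : (Fin m → Fin n) → (Fin m → Fin n) → ℂ) : Prop :=
  ∀ x : Fin n → ℂ, x ≠ 0 → ∃ r : ℝ, fpoly A x = r ∧ 0 < r

/-- Hermitian positive semidefiniteness. -/
def HermitianPSD {n m : ℕ} (A : (Fin m → Fin n) → (Fin m → Fin n) → ℂ) : Prop :=
  ∀ x : Fin n → ℂ, ∃ r : ℝ, fpoly A x = r ∧ 0 ≤ r

theorem hhat_eigenvalue_of_hermitian_is_real {n m : ℕ}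
    (A : (Fin (m+1) → Fin n) → (Fin (m+1) → Fin n) → ℂ)
    (hA : IsHermitianTensor A) (lam : ℂ) (x : Fin n → ℂ)
    (h : IsHhatEigenpair A lam x) :
    lam.im = 0 := by
  obtain ⟨hx, heig⟩ := h
  set S : ℝ := ∑ p, ‖x p‖ ^ (2*m+2) with hS
  have hSpos : 0 < S := by
    obtain ⟨p, hp⟩ := Function.ne_iff.mp hx
    refine Finset.sum_pos' (fun q _ => by positivity) ⟨p, Finset.mem_univ p, pow_pos (norm_pos_iff.mpr hp) _⟩
  -- fpoly A x = lam * S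
  have key : fpoly A x = lam * (S : ℂ) := by
    unfold fpoly
    rw [← Equiv.sum_comp (Fin.consEquiv (fun _ : Fin (m+1) => Fin n))
      (fun f => ∑ j : Fin (m+1) → Fin n,
        A f j * (∏ k, x (f k)) * ∏ k, (starRingEnd ℂ) (x (j k))),
      Fintype.sum_prod_type]
    have : ∀ p : Fin n,
        (∑ i : Fin m → Fin n, ∑ j : Fin (m+1) → Fin n,
          A (Fin.consEquiv (fun _ : Fin (m+1) => Fin n) (p, i)) j *
            (∏ k, x ((Fin.consEquiv (fun _ : Fin (m+1) => Fin n) (p, i)) k)) *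
            ∏ k, (starRingEnd ℂ) (x (j k)))
        = lam * (starRingEnd ℂ) (x p) * ((‖x p‖ : ℂ)) ^ (2*m) * x p := by
      intro p
      rw [← heig p]
      rw [Finset.sum_mul]
      refine Finset.sum_congr rfl fun i _ => ?_
      rw [Finset.sum_mul]
      refine Finset.sum_congr rfl fun j _ => ?_
      have hc : (Fin.consEquiv fun _ : Fin (m+1) => Fin n) (p, i) = Fin.cons p i := rfl
      rw [hc]
      simp only [Fin.prod_univ_succ, Fin.cons_zero, Fin.cons_succ]
      ring
    rw [Finset.sum_congr rfl (fun p _ => this p)]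
    rw [hS]
    push_cast
    rw [Finset.mul_sum]
    refine Finset.sum_congr rfl fun p _ => ?_
    have h1 : (starRingEnd ℂ) (x p) * x p = ((‖x p‖ : ℂ)) ^ 2 := by
      rw [mul_comm, Complex.mul_conj, Complex.normSq_eq_norm_sq]
      push_cast; ring
    calc lam * (starRingEnd ℂ) (x p) * ((‖x p‖ : ℂ)) ^ (2*m) * x p
        = lam * (((starRingEnd ℂ) (x p) * x p) * ((‖x p‖ : ℂ)) ^ (2*m)) := by ring
      _ = lam * ((‖x p‖ : ℂ)) ^ (2*m+2) := by rw [h1]; ring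
  -- fpoly is self-conjugate
  have hreal : (starRingEnd ℂ) (fpoly A x) = fpoly A x := by
    unfold fpoly
    rw [map_sum]
    simp only [map_sum, map_mul, map_prod, Complex.conj_conj]
    rw [Finset.sum_comm]
    refine Finset.sum_congr rfl fun i _ => Finset.sum_congr rfl fun j _ => ?_
    rw [hA]
    ring
  rw [key, map_mul, Complex.conj_ofReal] at hreal
  have hS0 : (S : ℂ) ≠ 0 := by exact_mod_cast hSpos.ne'
  have : (starRingEnd ℂ) lam = lam := mul_right_cancel₀ hS0 hreal
  have := Complex.conj_eq_iff_im.mp this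
  exact this
end

section
/- For any 2m-th order n-dimensional complex tensor A (n ≥ 2), the Li-Li-Kong type set K_llk(A) is contained in the Geršgorin type set K_ger(A): if z ∈ ℂ satisfies (|z − a_{i...iī...ī}| − r_i^j(A))|z − a_{j...jj̄...j̄}| ≤ |a_{ij...jj̄...j̄}| r_j(A) for some i ≠ j, then |z − a_{i...iī...ī}| ≤ r_i(A) or |z − a_{j...jj̄...j̄}| ≤ r_j(A). -/
open Complex Finset

theorem llk_subset_gershgorin {n m : ℕ} (hn : 1 < n)
    (A : (Fin (m+1) → Fin n) → (Fin (m+1) → Fin n) → ℂ)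
    (p q : Fin n) (hpq : p ≠ q) (z : ℂ)
    (h : (‖z - diagEntry A p‖ - rOffSub A p q) * ‖z - diagEntry A q‖
        ≤ ‖aSlice A p q‖ * rOff A q) :
    ‖z - diagEntry A p‖ ≤ rOff A p ∨
      ‖z - diagEntry A q‖ ≤ rOff A q := by
  by_contra hcon
  push_neg at hcon
  obtain ⟨ha, hb⟩ := hcon
  have hrq : 0 ≤ rOff A q := by
    apply Finset.sum_nonneg
    intro i _
    apply Finset.sum_nonneg
    intro j _
    split <;> positivity
  have hc : 0 ≤ ‖aSlice A p q‖ := norm_nonneg _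
  unfold rOffSub at h
  nlinarith [mul_le_mul_of_nonneg_left hb.le hc]
end
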